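/- arXiv:2511.13895 — 2 statements merged into one kernel-verified Lean document; each statement's English description precedes it below -/
import Mathlib

section
/- Let α ∈ (0,1) and let G₀ be a Borel probability measure on ℝ with finite second moment whose cumulative distribution function is continuous and strictly increasing (so that its quantiles are unique). Let G be a Borel probability measure on ℝ with finite second moment, mean m(G), α/2-quantile ℓ and (1−α/2)-quantile u, and let m(G₀), ℓ₀, u₀ be the corresponding quantities for G₀. Then ∫ [(m(G) − τ)² + S_int(ℓ,u;τ)] dG₀(τ) = ∫ [(m(G₀) − τ)² + S_int(ℓ₀,u₀;τ)] dG₀(τ) holds if and only if m(G) = m(G₀), ℓ = ℓ₀ and u = u₀. -/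
open MeasureTheory Set Filter



lemma Sint_eq (α ℓ u τ : ℝ) :
    (u - ℓ) + (2 / α) * (ℓ - τ) * (if τ < ℓ then 1 else 0)
    + (2 / α) * (τ - u) * (if u < τ then 1 else 0)
    = (u - ℓ) + (2 / α) * max (ℓ - τ) 0 + (2 / α) * max (τ - u) 0 := by
  rcases lt_or_ge τ ℓ with h | h <;> rcases lt_or_ge u τ with h' | h' <;>
    [ (rw [if_pos h, if_pos h', max_eq_left (by linarith : (0:ℝ) ≤ ℓ - τ),
        max_eq_left (by linarith : (0:ℝ) ≤ τ - u)]);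
      (rw [if_pos h, if_neg (not_lt.2 h'), max_eq_left (by linarith : (0:ℝ) ≤ ℓ - τ),
        max_eq_right (by linarith : τ - u ≤ 0)]);
      (rw [if_neg (not_lt.2 h), if_pos h', max_eq_right (by linarith : ℓ - τ ≤ 0),
        max_eq_left (by linarith : (0:ℝ) ≤ τ - u)]);
      (rw [if_neg (not_lt.2 h), if_neg (not_lt.2 h'), max_eq_right (by linarith : ℓ - τ ≤ 0),
        max_eq_right (by linarith : τ - u ≤ 0)])] <;> ring




lemma Iio_toReal_eq (μ : Measure ℝ) [IsProbabilityMeasure μ]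
    (hcont : Continuous fun t : ℝ => (μ (Iic t)).toReal) (t : ℝ) :
    (μ (Iio t)).toReal = (μ (Iic t)).toReal := by
  have hU : Iio t = ⋃ n : ℕ, Iic (t - 1 / (n + 1)) := by
    ext x
    simp only [mem_Iio, mem_iUnion, mem_Iic]
    constructor
    · intro hx
      obtain ⟨n, hn⟩ := exists_nat_one_div_lt (sub_pos.2 hx)
      exact ⟨n, by linarith⟩
    · rintro ⟨n, hn⟩
      have : (0:ℝ) < 1 / (n + 1) := by positivity
      linarith
  have hmono : Monotone fun n : ℕ => Iic (t - 1 / (n + 1 : ℝ)) := by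
    intro m n hmn
    apply Iic_subset_Iic.2
    have : (1:ℝ) / (n + 1) ≤ 1 / (m + 1) := by
      apply one_div_le_one_div_of_le (by positivity)
      exact_mod_cast by exact_mod_cast add_le_add_left (Nat.cast_le.2 hmn) 1
    linarith
  have h1 : Tendsto (fun n : ℕ => μ (Iic (t - 1 / (n + 1)))) atTop (nhds (μ (Iio t))) := by
    rw [hU]
    exact tendsto_measure_iUnion_atTop hmono
  have h2 : Tendsto (fun n : ℕ => (μ (Iic (t - 1 / (n + 1)))).toReal) atTop
      (nhds ((μ (Iio t)).toReal)) :=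
    (ENNReal.tendsto_toReal (measure_ne_top μ _)).comp h1
  have h3 : Tendsto (fun n : ℕ => (μ (Iic (t - 1 / (n + 1)))).toReal) atTop
      (nhds ((μ (Iic t)).toReal)) := by
    have ht : Tendsto (fun n : ℕ => t - 1 / (n + 1 : ℝ)) atTop (nhds t) := by
      have := tendsto_one_div_add_atTop_nhds_zero_nat (𝕜 := ℝ)
      have := (tendsto_const_nhds (x := t) (f := atTop (α := ℕ))).sub this
      simpa using this
    exact (hcont.tendsto t).comp ht
  exact tendsto_nhds_unique h2 h3

lemma quantile_val (μ : Measure ℝ) [IsProbabilityMeasure μ]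
    (hcont : Continuous fun t : ℝ => (μ (Iic t)).toReal) (q x : ℝ)
    (h1 : q ≤ (μ (Iic x)).toReal) (h2 : 1 - q ≤ (μ (Ici x)).toReal) :
    (μ (Iic x)).toReal = q := by
  have hsum : (μ (Iio x)).toReal + (μ (Ici x)).toReal = 1 := by
    have : μ (Iio x) + μ (Ici x) = 1 := by
      rw [← measure_union (Iio_disjoint_Ici le_rfl) measurableSet_Ici, Iio_union_Ici,
        measure_univ]
    have := congrArg ENNReal.toReal this
    rwa [ENNReal.toReal_add (measure_ne_top μ _) (measure_ne_top μ _)] at this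
  have := Iio_toReal_eq μ hcont x
  linarith


lemma maxdiff_int (μ : Measure ℝ) [IsProbabilityMeasure μ] (a b : ℝ) (hab : a ≤ b) :
    ∫ τ, (max (b - τ) 0 - max (a - τ) 0) ∂μ = ∫ t in Ioc a b, (μ (Iic t)).toReal := by
  set f : ℝ → ℝ → ℝ := fun τ t => if τ ≤ t then 1 else 0 with hf
  have hmeasS : MeasurableSet {p : ℝ × ℝ | p.1 ≤ p.2} :=
    measurableSet_le measurable_fst measurable_snd
  have huncurry : Function.uncurry f = ({p : ℝ × ℝ | p.1 ≤ p.2}).indicator (fun _ => (1:ℝ)) := by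
    ext p
    by_cases h : p.1 ≤ p.2 <;> simp [Function.uncurry, hf, h, indicator_apply]
  haveI : IsFiniteMeasure (volume.restrict (Ioc a b)) :=
    ⟨by rw [Measure.restrict_apply_univ]; exact measure_Ioc_lt_top⟩
  have hint : Integrable (Function.uncurry f) (μ.prod (volume.restrict (Ioc a b))) := by
    rw [huncurry]
    exact (integrable_const 1).indicator hmeasS
  have hswap := integral_integral_swap hint
  -- inner integral over τ
  have hinner2 : ∀ t : ℝ, ∫ τ, f τ t ∂μ = (μ (Iic t)).toReal := by
    intro t
    have : (fun τ => f τ t) = (Iic t).indicator (fun _ => (1:ℝ)) := by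
      ext τ; by_cases h : τ ≤ t <;> simp [hf, h, indicator_apply]
    rw [this, integral_indicator_const (1:ℝ) measurableSet_Iic, smul_eq_mul, mul_one, measureReal_def]
  -- inner integral over t
  have hinner1 : ∀ τ : ℝ, ∫ t in Ioc a b, f τ t = max (b - τ) 0 - max (a - τ) 0 := by
    intro τ
    have hfi : (fun t => f τ t) = (Ici τ).indicator (fun _ => (1:ℝ)) := by
      ext t; by_cases h : τ ≤ t <;> simp [hf, h, indicator_apply]
    rw [hfi, integral_indicator_const (1:ℝ) measurableSet_Ici, smul_eq_mul, mul_one,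
      measureReal_def, Measure.restrict_apply measurableSet_Ici]
    rcases le_or_gt τ a with h | h
    · have : Ici τ ∩ Ioc a b = Ioc a b := by
        apply inter_eq_self_of_subset_right
        intro x hx; exact le_trans h (le_of_lt hx.1)
      rw [this, Real.volume_Ioc, ENNReal.toReal_ofReal (by linarith)]
      rw [max_eq_left (by linarith), max_eq_left (by linarith)]
      ring
    · rcases le_or_gt τ b with h' | h'
      · have : Ici τ ∩ Ioc a b = Icc τ b := by
          ext x; simp only [mem_inter_iff, mem_Ici, mem_Ioc, mem_Icc]
          constructor
          · rintro ⟨h1, _, h3⟩; exact ⟨h1, h3⟩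
          · rintro ⟨h1, h2⟩; exact ⟨h1, lt_of_lt_of_le h h1, h2⟩
        rw [this, Real.volume_Icc, ENNReal.toReal_ofReal (by linarith)]
        rw [max_eq_left (by linarith), max_eq_right (by linarith)]
        ring
      · have : Ici τ ∩ Ioc a b = ∅ := by
          ext x; simp only [mem_inter_iff, mem_Ici, mem_Ioc, mem_empty_iff_false, iff_false]
          rintro ⟨h1, _, h3⟩; linarith
        rw [this, measure_empty, ENNReal.toReal_zero]
        rw [max_eq_right (by linarith), max_eq_right (by linarith)]
        ring
  calc ∫ τ, (max (b - τ) 0 - max (a - τ) 0) ∂μ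
      = ∫ τ, (∫ t in Ioc a b, f τ t) ∂μ :=
        integral_congr_ae (Filter.Eventually.of_forall fun τ => (hinner1 τ).symm)
    _ = ∫ t in Ioc a b, ∫ τ, f τ t ∂μ := hswap
    _ = ∫ t in Ioc a b, (μ (Iic t)).toReal :=
        integral_congr_ae (Filter.Eventually.of_forall fun t => hinner2 t)

-- strict positivity of ∫ t in Ioc a b, (F t - q) when F strictly increasing continuous, F a ≥ q, a < b
lemma pos_setint (F : ℝ → ℝ) (hcont : Continuous F) (hstrict : StrictMono F)
    (q a b : ℝ) (hq : q ≤ F a) (hab : a < b) :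
    0 < ∫ t in Ioc a b, (F t - q) := by
  set m := (a + b) / 2 with hm
  have ham : a < m := by rw [hm]; linarith
  have hmb : m < b := by rw [hm]; linarith
  have hInt : IntegrableOn (fun t => F t - q) (Ioc a b) volume :=
    (hcont.sub continuous_const).integrableOn_Ioc
  have hpos : ∀ t ∈ Ioc a b, (0:ℝ) ≤ F t - q := fun t ht => by
    have := hstrict ht.1; linarith
  have h1 : ∫ t in Ioc m b, (F t - q) ≤ ∫ t in Ioc a b, (F t - q) := by
    apply setIntegral_mono_set hInt
    · exact (ae_restrict_iff' measurableSet_Ioc).2 (Eventually.of_forall hpos)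
    · exact Eventually.of_forall (fun x hx => ⟨lt_trans ham hx.1, hx.2⟩)
  have h2 : ∫ t in Ioc m b, (F m - q) ≤ ∫ t in Ioc m b, (F t - q) := by
    apply setIntegral_mono_on (integrableOn_const measure_Ioc_lt_top.ne)
      (hInt.mono_set (fun x hx => ⟨lt_trans ham hx.1, hx.2⟩)) measurableSet_Ioc
    intro t ht
    have := (hstrict.le_iff_le).2 (le_of_lt ht.1)
    have := hstrict ht.1
    linarith
  have h3 : ∫ t in Ioc m b, (F m - q) = (b - m) * (F m - q) := by
    rw [setIntegral_const, measureReal_def, Real.volume_Ioc, ENNReal.toReal_ofReal (by linarith), smul_eq_mul]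
  have hFm : q < F m := lt_of_le_of_lt hq (hstrict ham)
  have : 0 < (b - m) * (F m - q) := by
    apply mul_pos <;> linarith
  linarith

lemma pos_setint' (F : ℝ → ℝ) (hcont : Continuous F) (hstrict : StrictMono F)
    (q a b : ℝ) (hq : F b ≤ q) (hab : a < b) :
    0 < ∫ t in Ioc a b, (q - F t) := by
  set m := (a + b) / 2 with hm
  have ham : a < m := by rw [hm]; linarith
  have hmb : m < b := by rw [hm]; linarith
  have hInt : IntegrableOn (fun t => q - F t) (Ioc a b) volume :=
    (continuous_const.sub hcont).integrableOn_Ioc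
  have hpos : ∀ t ∈ Ioc a b, (0:ℝ) ≤ q - F t := fun t ht => by
    have := (hstrict.le_iff_le).2 ht.2; linarith
  have h1 : ∫ t in Ioc a m, (q - F t) ≤ ∫ t in Ioc a b, (q - F t) := by
    apply setIntegral_mono_set hInt
    · exact (ae_restrict_iff' measurableSet_Ioc).2 (Eventually.of_forall hpos)
    · exact Eventually.of_forall (fun x hx => ⟨hx.1, le_trans hx.2 (le_of_lt hmb)⟩)
  have h2 : ∫ t in Ioc a m, (q - F m) ≤ ∫ t in Ioc a m, (q - F t) := by
    apply setIntegral_mono_on (integrableOn_const measure_Ioc_lt_top.ne)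
      (hInt.mono_set (fun x hx => ⟨hx.1, le_trans hx.2 (le_of_lt hmb)⟩)) measurableSet_Ioc
    intro t ht
    have := (hstrict.le_iff_le).2 ht.2
    linarith
  have h3 : ∫ t in Ioc a m, (q - F m) = (m - a) * (q - F m) := by
    rw [setIntegral_const, measureReal_def, Real.volume_Ioc, ENNReal.toReal_ofReal (by linarith), smul_eq_mul]
  have hFm : F m < q := lt_of_lt_of_le (hstrict hmb) hq
  have : 0 < (m - a) * (q - F m) := by apply mul_pos <;> linarith
  linarith

lemma Dpos (μ : Measure ℝ) [IsProbabilityMeasure μ]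
    (hcont : Continuous fun t : ℝ => (μ (Iic t)).toReal)
    (hstrict : StrictMono fun t : ℝ => (μ (Iic t)).toReal)
    (q c : ℝ) (hq : (μ (Iic c)).toReal = q) (x : ℝ) (hx : x ≠ c) :
    0 < (∫ τ, (max (x - τ) 0 - max (c - τ) 0) ∂μ) - q * (x - c) := by
  have hIntF : ∀ a b : ℝ, IntegrableOn (fun t : ℝ => (μ (Iic t)).toReal) (Ioc a b) volume :=
    fun a b => hcont.integrableOn_Ioc
  rcases lt_or_gt_of_ne hx with h | h
  · -- x < c
    have key := maxdiff_int μ x c (le_of_lt h)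
    have hflip : (∫ τ, (max (x - τ) 0 - max (c - τ) 0) ∂μ)
        = - ∫ τ, (max (c - τ) 0 - max (x - τ) 0) ∂μ := by
      rw [← integral_neg]
      exact integral_congr_ae (Eventually.of_forall fun τ => by ring)
    have hconst : (∫ t in Ioc x c, q) = q * (c - x) := by
      rw [setIntegral_const, measureReal_def, Real.volume_Ioc, ENNReal.toReal_ofReal (by linarith), smul_eq_mul]
      ring
    have hsub : ∫ t in Ioc x c, (q - (μ (Iic t)).toReal)
        = (∫ t in Ioc x c, q) - ∫ t in Ioc x c, (μ (Iic t)).toReal :=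
      integral_sub (integrableOn_const measure_Ioc_lt_top.ne) (hIntF x c)
    have hpos := pos_setint' (fun t : ℝ => (μ (Iic t)).toReal) hcont hstrict q x c
      (le_of_eq hq) h
    rw [hflip, key]
    rw [hsub, hconst] at hpos
    linarith
  · -- c < x
    have key := maxdiff_int μ c x (le_of_lt h)
    have hconst : (∫ t in Ioc c x, q) = q * (x - c) := by
      rw [setIntegral_const, measureReal_def, Real.volume_Ioc, ENNReal.toReal_ofReal (by linarith), smul_eq_mul]
      ring
    have hsub : ∫ t in Ioc c x, ((μ (Iic t)).toReal - q)
        = (∫ t in Ioc c x, (μ (Iic t)).toReal) - ∫ t in Ioc c x, q :=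
      integral_sub (hIntF c x) (integrableOn_const measure_Ioc_lt_top.ne)
    have hpos := pos_setint (fun t : ℝ => (μ (Iic t)).toReal) hcont hstrict q c x
      (ge_of_eq hq) h
    rw [key]
    rw [hsub, hconst] at hpos
    linarith

lemma maxflip (a b : ℝ) : max (a - b) 0 = max (b - a) 0 + (a - b) := by
  rcases le_total a b with h | h
  · rw [max_eq_right (by linarith), max_eq_left (by linarith)]; ring
  · rw [max_eq_left (by linarith), max_eq_right (by linarith)]; ring


/-- The interval score of the interval `[ℓ, u]` at observation `τ`, at level `α`. -/
noncomputable def Sint (α ℓ u τ : ℝ) : ℝ :=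
  (u - ℓ) + (2 / α) * (ℓ - τ) * (if τ < ℓ then 1 else 0)
    + (2 / α) * (τ - u) * (if u < τ then 1 else 0)

/-- `x` is a `q`-quantile of the Borel probability measure `G` on `ℝ`. -/
def IsQuantile (G : Measure ℝ) (q x : ℝ) : Prop :=
  q ≤ (G (Iic x)).toReal ∧ 1 - q ≤ (G (Ici x)).toReal

/-- Equality of the expected combined score holds if and only if the reported mean and
central quantiles agree with those of the true distribution `G₀` (whose CDF is assumed
continuous and strictly increasing, so quantiles are unique). -/
theorem stmt1 (α : ℝ) (hα : α ∈ Ioo (0 : ℝ) 1)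
    (G₀ G : Measure ℝ) [IsProbabilityMeasure G₀] [IsProbabilityMeasure G]
    (hG₀ : MemLp id 2 G₀) (hG : MemLp id 2 G)
    (hcont : Continuous fun t : ℝ => (G₀ (Iic t)).toReal)
    (hstrict : StrictMono fun t : ℝ => (G₀ (Iic t)).toReal)
    (ℓ u ℓ₀ u₀ : ℝ)
    (hℓ : IsQuantile G (α / 2) ℓ) (hu : IsQuantile G (1 - α / 2) u)
    (hℓ₀ : IsQuantile G₀ (α / 2) ℓ₀) (hu₀ : IsQuantile G₀ (1 - α / 2) u₀) :
    (∫ τ, (((∫ t, t ∂G) - τ) ^ 2 + Sint α ℓ u τ) ∂G₀)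
        = (∫ τ, (((∫ t, t ∂G₀) - τ) ^ 2 + Sint α ℓ₀ u₀ τ) ∂G₀)
      ↔ ((∫ t, t ∂G) = (∫ t, t ∂G₀) ∧ ℓ = ℓ₀ ∧ u = u₀) := by
  obtain ⟨hα0, hα1⟩ := hα
  have hαne : α ≠ 0 := ne_of_gt hα0
  have ha2 : (0:ℝ) < 2 / α := by positivity
  set m : ℝ := ∫ t, t ∂G with hm
  set m₀ : ℝ := ∫ t, t ∂G₀ with hm₀
  -- integrability facts
  have hid : Integrable (fun τ : ℝ => τ) G₀ := hG₀.integrable one_le_two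
  have hsqid : Integrable (fun τ : ℝ => τ ^ 2) G₀ := by simpa using hG₀.integrable_sq
  have hsqint : ∀ c : ℝ, Integrable (fun τ : ℝ => (c - τ) ^ 2) G₀ := by
    intro c
    have h := ((memLp_const (μ := G₀) (p := 2) c).sub hG₀).integrable_sq
    simpa using h
  have hmax1 : ∀ x : ℝ, Integrable (fun τ : ℝ => max (x - τ) 0) G₀ := by
    intro x
    have h := ((integrable_const (μ := G₀) x).sub hid).sup (integrable_const (0:ℝ))
    have he : (fun τ : ℝ => max (x - τ) 0)
        = ((fun τ : ℝ => x - τ) ⊔ (fun _ : ℝ => (0:ℝ))) := by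
      funext τ; simp [Pi.sup_apply, max_def]
    rwa [he]
  -- mean expansion
  have hmean : ∀ c : ℝ, ∫ τ, (c - τ) ^ 2 ∂G₀ = c ^ 2 - 2 * c * m₀ + ∫ τ, τ ^ 2 ∂G₀ := by
    intro c
    have he : (fun τ : ℝ => (c - τ) ^ 2)
        = fun τ : ℝ => (c ^ 2 + (-(2 * c)) * τ) + τ ^ 2 := by
      funext τ; ring
    have iA : Integrable (fun τ : ℝ => -(2 * c) * τ) G₀ := hid.const_mul _
    have iB : Integrable (fun τ : ℝ => c ^ 2 + -(2 * c) * τ) G₀ := (integrable_const _).add iA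
    rw [he, integral_add iB hsqid, integral_add (integrable_const _) iA, integral_const,
      integral_const_mul, measureReal_def, measure_univ, ENNReal.toReal_one, smul_eq_mul, one_mul, ← hm₀]
    ring
  -- total expected score
  have hTotal : ∀ c x y : ℝ, (∫ τ, ((c - τ) ^ 2 + Sint α x y τ) ∂G₀)
      = (c ^ 2 - 2 * c * m₀ + ∫ τ, τ ^ 2 ∂G₀) + (y - x)
        + (2 / α) * (∫ τ, max (x - τ) 0 ∂G₀)
        + (2 / α) * (∫ τ, max (y - τ) 0 ∂G₀) + (2 / α) * (m₀ - y) := by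
    intro c x y
    have he : (fun τ : ℝ => (c - τ) ^ 2 + Sint α x y τ)
        = fun τ : ℝ => (c - τ) ^ 2 + ((2 / α) * max (x - τ) 0
            + ((2 / α) * max (y - τ) 0 + ((2 / α) * (τ - y) + (y - x)))) := by
      funext τ
      rw [Sint, Sint_eq, maxflip τ y]
      ring
    have j4 : Integrable (fun τ : ℝ => τ - y) G₀ := hid.sub (integrable_const _)
    have j3 : Integrable (fun τ : ℝ => 2 / α * (τ - y)) G₀ := j4.const_mul _
    have j2 : Integrable (fun τ : ℝ => 2 / α * max (y - τ) 0) G₀ := (hmax1 y).const_mul _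
    have j1 : Integrable (fun τ : ℝ => 2 / α * max (x - τ) 0) G₀ := (hmax1 x).const_mul _
    have i5 : Integrable (fun τ : ℝ => 2 / α * (τ - y) + (y - x)) G₀ :=
      j3.add (integrable_const _)
    have i4 : Integrable (fun τ : ℝ => 2 / α * max (y - τ) 0
        + (2 / α * (τ - y) + (y - x))) G₀ := j2.add i5
    have i3 : Integrable (fun τ : ℝ => 2 / α * max (x - τ) 0
        + (2 / α * max (y - τ) 0 + (2 / α * (τ - y) + (y - x)))) G₀ := j1.add i4
    rw [he, integral_add (hsqint c) i3, integral_add j1 i4, integral_add j2 i5,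
      integral_add j3 (integrable_const _), integral_const_mul, integral_const_mul,
      integral_const_mul, integral_sub hid (integrable_const _), integral_const,
      integral_const, measureReal_def, measure_univ, ENNReal.toReal_one, one_smul, one_smul, hmean c, ← hm₀]
    ring
  -- quantile values of G₀
  have hFl : (G₀ (Iic ℓ₀)).toReal = α / 2 := quantile_val G₀ hcont _ _ hℓ₀.1 hℓ₀.2
  have hFu : (G₀ (Iic u₀)).toReal = 1 - α / 2 := quantile_val G₀ hcont _ _ hu₀.1 hu₀.2
  -- the D terms
  set Dl : ℝ := (∫ τ, (max (ℓ - τ) 0 - max (ℓ₀ - τ) 0) ∂G₀) - (α / 2) * (ℓ - ℓ₀) with hDl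
  set Du : ℝ := (∫ τ, (max (u - τ) 0 - max (u₀ - τ) 0) ∂G₀) - (1 - α / 2) * (u - u₀) with hDu
  have hDlpos : ℓ ≠ ℓ₀ → 0 < Dl := fun h => Dpos G₀ hcont hstrict _ _ hFl ℓ h
  have hDupos : u ≠ u₀ → 0 < Du := fun h => Dpos G₀ hcont hstrict _ _ hFu u h
  have hDlzero : ℓ = ℓ₀ → Dl = 0 := by
    intro h; subst h; rw [hDl]; simp
  have hDuzero : u = u₀ → Du = 0 := by
    intro h; subst h; rw [hDu]; simp
  have hDlnn : 0 ≤ Dl := by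
    by_cases h : ℓ = ℓ₀
    · exact le_of_eq (hDlzero h).symm
    · exact le_of_lt (hDlpos h)
  have hDunn : 0 ≤ Du := by
    by_cases h : u = u₀
    · exact le_of_eq (hDuzero h).symm
    · exact le_of_lt (hDupos h)
  -- difference identity
  have hMl : (∫ τ, (max (ℓ - τ) 0 - max (ℓ₀ - τ) 0) ∂G₀)
      = (∫ τ, max (ℓ - τ) 0 ∂G₀) - ∫ τ, max (ℓ₀ - τ) 0 ∂G₀ :=
    integral_sub (hmax1 ℓ) (hmax1 ℓ₀)
  have hMu : (∫ τ, (max (u - τ) 0 - max (u₀ - τ) 0) ∂G₀)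
      = (∫ τ, max (u - τ) 0 ∂G₀) - ∫ τ, max (u₀ - τ) 0 ∂G₀ :=
    integral_sub (hmax1 u) (hmax1 u₀)
  have hdiff : (∫ τ, ((m - τ) ^ 2 + Sint α ℓ u τ) ∂G₀)
      - (∫ τ, ((m₀ - τ) ^ 2 + Sint α ℓ₀ u₀ τ) ∂G₀)
      = (m - m₀) ^ 2 + (2 / α) * Dl + (2 / α) * Du := by
    rw [hTotal m ℓ u, hTotal m₀ ℓ₀ u₀, hDl, hDu, hMl, hMu]
    field_simp
    ring
  constructor
  · intro heq
    have hzero : (m - m₀) ^ 2 + (2 / α) * Dl + (2 / α) * Du = 0 := by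
      rw [← hdiff, heq]; ring
    have hsq := sq_nonneg (m - m₀)
    have h1 : 0 ≤ (2 / α) * Dl := mul_nonneg (le_of_lt ha2) hDlnn
    have h2 : 0 ≤ (2 / α) * Du := mul_nonneg (le_of_lt ha2) hDunn
    have hl : ℓ = ℓ₀ := by
      by_contra h
      have := mul_pos ha2 (hDlpos h)
      linarith
    have hu' : u = u₀ := by
      by_contra h
      have := mul_pos ha2 (hDupos h)
      linarith
    have hmm : m = m₀ := by
      have : (m - m₀) ^ 2 = 0 := by linarith
      have := pow_eq_zero_iff (n := 2) (by norm_num) |>.1 this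
      linarith
    exact ⟨hmm, hl, hu'⟩
  · rintro ⟨h1, h2, h3⟩
    rw [show m = m₀ from h1, h2, h3]
end

section
/- Let τ ∈ ℝ, σ > 0, n ≥ 1 a natural number, ω > 0, z > 0 and α ∈ (0,1). Let W be a Gaussian random variable with mean τ and variance σ²/n, and set a = z·σ/√(ωn). Then the expected score of the tempered-posterior summaries equals E[(W − τ)² + S_int(W − a, W + a; τ)] = σ²/n + (2σ/√n)·[ z/√ω + (2/α)·( φ(z/√ω) − (z/√ω)·Φ̄(z/√ω) ) ]. -/
open MeasureTheory ProbabilityTheory Set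
open scoped NNReal ENNReal

/-- The standard normal density `φ(t) = (2π)^{-1/2} exp(-t²/2)`. -/
noncomputable def phi (t : ℝ) : ℝ := (Real.sqrt (2 * Real.pi))⁻¹ * Real.exp (-t ^ 2 / 2)

/-- The standard normal cumulative distribution function `Φ`. -/
noncomputable def Phi (t : ℝ) : ℝ := ((gaussianReal 0 1) (Iic t)).toReal



lemma phi_nonneg (t : ℝ) : 0 ≤ phi t := by unfold phi; positivity

lemma continuous_phi : Continuous phi := by unfold phi; fun_prop

lemma phi_neg (t : ℝ) : phi (-t) = phi t := by simp [phi]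

lemma gaussianPDFReal_zero_one : gaussianPDFReal 0 1 = phi := by
  ext x
  simp [gaussianPDFReal, phi]

lemma integral_gaussian01 (g : ℝ → ℝ) :
    ∫ x, g x ∂(gaussianReal 0 1) = ∫ x, g x * phi x := by
  rw [gaussianReal_of_var_ne_zero 0 one_ne_zero]
  have h : gaussianPDF 0 1 = fun x => ((Real.toNNReal (phi x) : ℝ≥0) : ℝ≥0∞) := by
    ext x
    rw [gaussianPDF, gaussianPDFReal_zero_one]
    rfl
  rw [h, integral_withDensity_eq_integral_smul (continuous_phi.measurable.real_toNNReal) g]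
  congr 1
  ext x
  rw [NNReal.smul_def, Real.coe_toNNReal _ (phi_nonneg x), smul_eq_mul, mul_comm]

lemma integrable_phi : Integrable phi := by
  have : phi = fun x => (Real.sqrt (2 * Real.pi))⁻¹ * Real.exp (-(2⁻¹:ℝ) * x ^ 2) := by
    funext x; unfold phi; ring_nf
  rw [this]
  exact (integrable_exp_neg_mul_sq (by norm_num)).const_mul _

lemma integrable_id_phi : Integrable (fun x => x * phi x) := by
  have : (fun x => x * phi x)
      = fun x => (Real.sqrt (2 * Real.pi))⁻¹ * (x * Real.exp (-(2⁻¹:ℝ) * x ^ 2)) := by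
    funext x; unfold phi; ring_nf
  rw [this]
  exact (integrable_mul_exp_neg_mul_sq (by norm_num)).const_mul _

lemma integrable_sq_phi : Integrable (fun x => x ^ 2 * phi x) := by
  refine ((integrable_exp_neg_mul_sq (b := 4⁻¹) (by norm_num)).const_mul
    (4 * (Real.sqrt (2 * Real.pi))⁻¹)).mono
    (by exact ((measurable_id.pow_const 2).mul continuous_phi.measurable).aestronglyMeasurable)
    (ae_of_all _ fun x => ?_)
  have h1 : x ^ 2 / 4 ≤ Real.exp (x ^ 2 / 4) :=
    le_trans (by linarith [Real.add_one_le_exp (x^2/4)]) le_rfl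
  have h2 : (0:ℝ) ≤ Real.exp (x^2/4) := (Real.exp_pos _).le
  have hk : (0:ℝ) ≤ (Real.sqrt (2 * Real.pi))⁻¹ := by positivity
  rw [Real.norm_eq_abs, Real.norm_eq_abs, abs_of_nonneg (mul_nonneg (sq_nonneg x) (phi_nonneg x)),
    abs_of_nonneg (mul_nonneg (mul_nonneg (by norm_num) hk) (Real.exp_pos _).le)]
  unfold phi
  have key : x ^ 2 * Real.exp (-x ^ 2 / 2) ≤ 4 * Real.exp (-(4⁻¹) * x ^ 2) := by
    have : x ^ 2 * Real.exp (-x ^ 2 / 2) ≤ 4 * Real.exp (x^2/4) * Real.exp (-x ^ 2 / 2) := by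
      have := mul_le_mul_of_nonneg_right (by linarith : x ^ 2 ≤ 4 * Real.exp (x^2/4))
        (Real.exp_pos (-x^2/2)).le
      linarith
    calc x ^ 2 * Real.exp (-x ^ 2 / 2) ≤ 4 * Real.exp (x^2/4) * Real.exp (-x ^ 2 / 2) := this
      _ = 4 * Real.exp (-(4⁻¹) * x ^ 2) := by rw [mul_assoc, ← Real.exp_add]; ring_nf
  calc x ^ 2 * ((Real.sqrt (2 * Real.pi))⁻¹ * Real.exp (-x ^ 2 / 2))
      = (Real.sqrt (2 * Real.pi))⁻¹ * (x ^ 2 * Real.exp (-x ^ 2 / 2)) := by ring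
    _ ≤ (Real.sqrt (2 * Real.pi))⁻¹ * (4 * Real.exp (-(4⁻¹) * x ^ 2)) :=
        mul_le_mul_of_nonneg_left key hk
    _ = 4 * (Real.sqrt (2 * Real.pi))⁻¹ * Real.exp (-(4⁻¹) * x ^ 2) := by ring


lemma tendsto_phi_atTop : Filter.Tendsto phi Filter.atTop (nhds 0) := by
  have h : Filter.Tendsto (fun x : ℝ => -x ^ 2 / 2) Filter.atTop Filter.atBot := by
    apply Filter.Tendsto.atBot_div_const (by norm_num)
    exact Filter.tendsto_neg_atBot_iff.mpr (Filter.tendsto_pow_atTop (by norm_num))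
  have h2 := ((Real.tendsto_exp_atBot).comp h).const_mul (Real.sqrt (2 * Real.pi))⁻¹
  rw [mul_zero] at h2
  exact h2.congr fun x => rfl

lemma tendsto_id_phi_atTop : Filter.Tendsto (fun x => x * phi x) Filter.atTop (nhds 0) := by
  have h := rpow_mul_exp_neg_mul_sq_isLittleO_exp_neg (b := 2⁻¹) (by norm_num) 1
  have h0 : Filter.Tendsto (fun x : ℝ => Real.exp (-(1/2) * x)) Filter.atTop (nhds 0) := by
    apply Real.tendsto_exp_comp_nhds_zero.mpr
    have h1 := Filter.tendsto_neg_atBot_iff.mpr (Filter.tendsto_id (α := ℝ))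
    have h2 := h1.atBot_div_const (show (0:ℝ) < 2 by norm_num)
    exact h2.congr fun x => by simp only [id]; ring
  have ht := h.isBigO.trans_tendsto h0
  have key : Filter.Tendsto (fun x : ℝ => x * Real.exp (-2⁻¹ * x ^ 2)) Filter.atTop (nhds 0) := by
    have heq : (fun x : ℝ => x ^ (1:ℝ) * Real.exp (-2⁻¹ * x ^ 2))
        = fun x : ℝ => x * Real.exp (-2⁻¹ * x ^ 2) := by
      funext x; rw [Real.rpow_one]
    rwa [heq] at ht
  have h2 := key.const_mul (Real.sqrt (2 * Real.pi))⁻¹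
  rw [mul_zero] at h2
  exact h2.congr fun x => by unfold phi; ring_nf

lemma hasDerivAt_phi (x : ℝ) : HasDerivAt phi (-(x * phi x)) x := by
  have h1 : HasDerivAt (fun t : ℝ => -t ^ 2 / 2) (-x) x := by
    have := ((hasDerivAt_pow 2 x).neg).div_const 2
    refine this.congr_deriv ?_
    ring
  have h2 := (h1.exp).const_mul (Real.sqrt (2 * Real.pi))⁻¹
  refine h2.congr_deriv ?_
  unfold phi
  ring

lemma hasDerivAt_neg_phi (x : ℝ) : HasDerivAt (fun t => -phi t) (x * phi x) x := by
  exact (hasDerivAt_phi x).neg.congr_deriv (neg_neg _)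

lemma hasDerivAt_neg_id_phi (x : ℝ) :
    HasDerivAt (fun t => -(t * phi t)) ((x ^ 2 - 1) * phi x) x := by
  have h := ((hasDerivAt_id x).mul (hasDerivAt_phi x)).neg
  refine h.congr_deriv ?_
  simp only [id]
  ring

lemma integral_phi : ∫ x, phi x = 1 := by
  rw [← gaussianPDFReal_zero_one]
  exact integral_gaussianPDFReal_eq_one 0 one_ne_zero

lemma integral_Ioi_id_phi (c : ℝ) : ∫ x in Ioi c, x * phi x = phi c := by
  have h := integral_Ioi_of_hasDerivAt_of_tendsto
    (f := fun t => -phi t) (f' := fun x => x * phi x) (a := c) (m := 0)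
    (continuous_phi.neg.continuousWithinAt)
    (fun x _ => hasDerivAt_neg_phi x)
    (integrable_id_phi.integrableOn)
    (by simpa using tendsto_phi_atTop.neg)
  simpa using h

lemma Phi_eq_integral (t : ℝ) : Phi t = ∫ x in Iic t, phi x := by
  unfold Phi
  rw [gaussianReal_apply_eq_integral 0 one_ne_zero, gaussianPDFReal_zero_one,
    ENNReal.toReal_ofReal (setIntegral_nonneg measurableSet_Iic fun x _ => phi_nonneg x)]

lemma integral_Ioi_phi (c : ℝ) : ∫ x in Ioi c, phi x = 1 - Phi c := by
  have h := intervalIntegral.integral_Iic_add_Ioi (b := c) (f := phi) (μ := volume)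
    integrable_phi.integrableOn integrable_phi.integrableOn
  rw [integral_phi] at h
  rw [Phi_eq_integral]
  linarith

lemma integral_sq_phi : ∫ x, x ^ 2 * phi x = 1 := by
  have hint : Integrable (fun x => (x ^ 2 - 1) * phi x) := by
    refine (integrable_sq_phi.sub integrable_phi).congr (ae_of_all _ fun x => ?_)
    simp only [Pi.sub_apply]
    ring
  have hIoi : ∫ x in Ioi (0:ℝ), (x ^ 2 - 1) * phi x = 0 := by
    have h := integral_Ioi_of_hasDerivAt_of_tendsto
      (f := fun t => -(t * phi t)) (f' := fun x => (x ^ 2 - 1) * phi x) (a := 0) (m := 0)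
      ((continuous_id.mul continuous_phi).neg.continuousWithinAt)
      (fun x _ => hasDerivAt_neg_id_phi x)
      (hint.integrableOn)
      (by simpa using tendsto_id_phi_atTop.neg)
    simpa using h
  have hIic : ∫ x in Iic (0:ℝ), (x ^ 2 - 1) * phi x = 0 := by
    calc ∫ x in Iic (0:ℝ), (x ^ 2 - 1) * phi x
        = ∫ x in Iic (0:ℝ), ((-x) ^ 2 - 1) * phi (-x) := by
          refine setIntegral_congr_fun measurableSet_Iic fun x _ => ?_
          rw [phi_neg]
          ring
      _ = ∫ x in Ioi (-(0:ℝ)), (x ^ 2 - 1) * phi x :=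
          integral_comp_neg_Iic (0:ℝ) (fun x => (x ^ 2 - 1) * phi x)
      _ = 0 := by rw [neg_zero, hIoi]
  have hsplit := intervalIntegral.integral_Iic_add_Ioi (b := (0:ℝ))
    (f := fun x => (x ^ 2 - 1) * phi x) hint.integrableOn hint.integrableOn
  have hsub := integral_sub integrable_sq_phi integrable_phi
  rw [integral_phi] at hsub
  have heq : ∫ x, (x ^ 2 - 1) * phi x = (∫ x, x ^ 2 * phi x) - 1 := by
    rw [← hsub]
    congr 1
    funext x
    ring
  rw [hIic, hIoi, heq] at hsplit
  linarith

/-- Expected combined score of the tempered-posterior summaries in the Gaussian model: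
for `W ~ N(τ, σ²/n)` and `a = zσ/√(ωn)`,
`E[(W − τ)² + S_int(W − a, W + a; τ)]
  = σ²/n + (2σ/√n) [ z/√ω + (2/α)(φ(z/√ω) − (z/√ω) Φ̄(z/√ω)) ]`. -/

theorem stmt10 (τ σ : ℝ) (n : ℕ) (ω z α : ℝ)
    (hσ : 0 < σ) (hn : 1 ≤ n) (hω : 0 < ω) (hz : 0 < z) (hα : α ∈ Ioo (0 : ℝ) 1) :
    (∫ w, ((w - τ) ^ 2
          + Sint α (w - z * σ / Real.sqrt (ω * n)) (w + z * σ / Real.sqrt (ω * n)) τ)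
        ∂(gaussianReal τ (Real.toNNReal (σ ^ 2 / n))))
      = σ ^ 2 / n
        + (2 * σ / Real.sqrt n)
          * (z / Real.sqrt ω
            + (2 / α) * (phi (z / Real.sqrt ω)
              - (z / Real.sqrt ω) * (1 - Phi (z / Real.sqrt ω)))) := by
  have hn0 : (0:ℝ) < n := by exact_mod_cast Nat.lt_of_lt_of_le Nat.zero_lt_one hn
  have hsn : (0:ℝ) < Real.sqrt n := Real.sqrt_pos.mpr hn0
  have hsw : (0:ℝ) < Real.sqrt ω := Real.sqrt_pos.mpr hω
  set c : ℝ := z / Real.sqrt ω with hcdef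
  set s : ℝ := σ / Real.sqrt n with hsdef
  set a : ℝ := z * σ / Real.sqrt (ω * n) with hadef
  have hs : 0 < s := div_pos hσ hsn
  have hc : 0 < c := div_pos hz hsw
  have hs2 : s ^ 2 = σ ^ 2 / n := by
    rw [hsdef, div_pow, Real.sq_sqrt hn0.le]
  have hax : a = s * c := by
    rw [hadef, hsdef, hcdef, Real.sqrt_mul hω.le]
    field_simp
  -- the measure as a pushforward of the standard gaussian
  have hvar : (Real.toNNReal (σ ^ 2 / n)) = (NNReal.mk (s ^ 2) (sq_nonneg s) * 1 : ℝ≥0) := by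
    apply NNReal.coe_injective
    rw [NNReal.coe_mul, NNReal.coe_one, NNReal.coe_mk,
      Real.coe_toNNReal _ (by positivity : (0:ℝ) ≤ σ ^ 2 / n), hs2, mul_one]
  have hmap : gaussianReal τ (Real.toNNReal (σ ^ 2 / n))
      = (gaussianReal 0 1).map (fun x => s * x + τ) := by
    have h1 : (fun x : ℝ => s * x + τ) = (fun y => y + τ) ∘ (fun x => s * x) := rfl
    rw [h1, ← Measure.map_map (measurable_add_const τ) (measurable_const_mul s)]
    rw [show (fun x : ℝ => s * x) = (s * ·) from rfl, gaussianReal_map_const_mul,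
      show (fun y : ℝ => y + τ) = (· + τ) from rfl, gaussianReal_map_add_const]
    rw [hvar]
    norm_num
  -- measurability of the integrand
  have hmeas : Measurable (fun w : ℝ => (w - τ) ^ 2 + Sint α (w - a) (w + a) τ) := by
    unfold Sint
    have hset1 : MeasurableSet {w : ℝ | τ < w - a} :=
      measurableSet_lt measurable_const (measurable_id.sub_const a)
    have hset2 : MeasurableSet {w : ℝ | w + a < τ} :=
      measurableSet_lt (measurable_id.add_const a) measurable_const
    refine (((measurable_id.sub_const τ).pow_const 2).add
      (Measurable.add (Measurable.add ?_ ?_) ?_))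
    · exact (measurable_id.add_const a).sub (measurable_id.sub_const a)
    · exact (measurable_const.mul ((measurable_id.sub_const a).sub_const τ)).mul
        (Measurable.ite hset1 measurable_const measurable_const)
    · exact (measurable_const.mul (measurable_const.sub (measurable_id.add_const a))).mul
        (Measurable.ite hset2 measurable_const measurable_const)
  rw [hmap, integral_map (by fun_prop) hmeas.aestronglyMeasurable, integral_gaussian01]
  -- pointwise identification of the integrand
  have hpt : ∀ x : ℝ,
      ((s * x + τ - τ) ^ 2 + Sint α (s * x + τ - a) (s * x + τ + a) τ) * phi x
        = s ^ 2 * (x ^ 2 * phi x) + (2 * (s * c)) * phi x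
          + (Ioi c).indicator (fun y => (2 / α) * (s * y - s * c) * phi y) x
          + (Iio (-c)).indicator (fun y => (2 / α) * (-(s * y) - s * c) * phi y) x := by
    intro x
    have hc1 : (τ < s * x + τ - a) ↔ (c < x) := by
      rw [hax]
      constructor <;> intro h <;> nlinarith
    have hc2 : (s * x + τ + a < τ) ↔ (x < -c) := by
      rw [hax]
      constructor <;> intro h <;> nlinarith
    simp only [Sint]
    simp only [hc1, hc2]
    simp only [indicator, mem_Ioi, mem_Iio, hax]
    by_cases h1 : c < x <;> by_cases h2 : x < -c <;>
      simp only [h1, h2, if_true, if_false] <;> ring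
  rw [integral_congr_ae (ae_of_all _ hpt)]
  -- integrability of the pieces
  have ig1 : Integrable (fun x => s ^ 2 * (x ^ 2 * phi x)) := integrable_sq_phi.const_mul _
  have ig2 : Integrable (fun x => (2 * (s * c)) * phi x) := integrable_phi.const_mul _
  have glob3 : Integrable (fun y => (2 / α) * (s * y - s * c) * phi y) := by
    refine ((integrable_id_phi.const_mul (2 / α * s)).sub
      (integrable_phi.const_mul (2 / α * (s * c)))).congr (ae_of_all _ fun y => ?_)
    simp only [Pi.sub_apply]
    ring
  have glob4 : Integrable (fun y => (2 / α) * (-(s * y) - s * c) * phi y) := by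
    refine ((integrable_id_phi.const_mul (-(2 / α * s))).sub
      (integrable_phi.const_mul (2 / α * (s * c)))).congr (ae_of_all _ fun y => ?_)
    simp only [Pi.sub_apply]
    ring
  have ig3 : Integrable
      (fun x => (Ioi c).indicator (fun y => (2 / α) * (s * y - s * c) * phi y) x) :=
    glob3.indicator (measurableSet_Ioi (a := c))
  have ig4 : Integrable
      (fun x => (Iio (-c)).indicator (fun y => (2 / α) * (-(s * y) - s * c) * phi y) x) :=
    glob4.indicator (measurableSet_Iio (a := -c))
  have ig12 : Integrable (fun x => s ^ 2 * (x ^ 2 * phi x) + (2 * (s * c)) * phi x) :=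
    ig1.add ig2
  have ig123 : Integrable (fun x => s ^ 2 * (x ^ 2 * phi x) + (2 * (s * c)) * phi x
      + (Ioi c).indicator (fun y => (2 / α) * (s * y - s * c) * phi y) x) := ig12.add ig3
  rw [integral_add ig123 ig4, integral_add ig12 ig3,
    integral_add ig1 ig2, integral_const_mul, integral_const_mul, integral_sq_phi, integral_phi]
  -- upper tail integral
  have E3 : ∫ x, (Ioi c).indicator (fun y => (2 / α) * (s * y - s * c) * phi y) x
      = (2 / α) * (s * phi c - s * c * (1 - Phi c)) := by
    rw [integral_indicator measurableSet_Ioi]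
    have hrw : ∫ y in Ioi c, (2 / α) * (s * y - s * c) * phi y
        = ∫ y in Ioi c, ((2 / α * s) * (y * phi y) - (2 / α * (s * c)) * phi y) := by
      refine setIntegral_congr_fun measurableSet_Ioi fun y _ => ?_
      ring
    rw [hrw, integral_sub ((integrable_id_phi.const_mul (2 / α * s)).integrableOn)
      ((integrable_phi.const_mul (2 / α * (s * c))).integrableOn),
      integral_const_mul, integral_const_mul, integral_Ioi_id_phi, integral_Ioi_phi]
    ring
  -- lower tail integral
  have E4 : ∫ x, (Iio (-c)).indicator (fun y => (2 / α) * (-(s * y) - s * c) * phi y) x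
      = (2 / α) * (s * phi c - s * c * (1 - Phi c)) := by
    rw [integral_indicator measurableSet_Iio]
    have h1 : ∫ y in Iio (-c), (2 / α) * (-(s * y) - s * c) * phi y
        = ∫ y in Iic (-c), (2 / α) * (-(s * y) - s * c) * phi y :=
      setIntegral_congr_set Iio_ae_eq_Iic
    have h2 : ∫ y in Iic (-c), (2 / α) * (-(s * y) - s * c) * phi y
        = ∫ y in Iic (-c), (fun t => (2 / α) * (s * t - s * c) * phi t) (-y) := by
      refine setIntegral_congr_fun measurableSet_Iic fun y _ => ?_
      simp only [phi_neg]
      ring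
    rw [h1, h2, integral_comp_neg_Iic (-c) (fun t => (2 / α) * (s * t - s * c) * phi t),
      neg_neg]
    have hrw : ∫ y in Ioi c, (2 / α) * (s * y - s * c) * phi y
        = ∫ y in Ioi c, ((2 / α * s) * (y * phi y) - (2 / α * (s * c)) * phi y) := by
      refine setIntegral_congr_fun measurableSet_Ioi fun y _ => ?_
      ring
    rw [hrw, integral_sub ((integrable_id_phi.const_mul (2 / α * s)).integrableOn)
      ((integrable_phi.const_mul (2 / α * (s * c))).integrableOn),
      integral_const_mul, integral_const_mul, integral_Ioi_id_phi, integral_Ioi_phi]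
    ring
  rw [E3, E4, ← hs2]
  have h2s : 2 * σ / Real.sqrt n = 2 * s := by
    rw [hsdef]; ring
  rw [h2s]
  field_simp
  ring
end
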